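/- Let S be a preordered abelian monoid with S ≠ {0}. If S has plain paradoxes, then either S admits a nontrivial state or S is purely infinite. Conversely, if S is simple and either S admits a nontrivial state (such a state is necessarily faithful and finite) or S is purely infinite, then S has plain paradoxes. -/

import Mathlib

open scoped ENNReal

/-- A state on a preordered abelian monoid. -/
def IsState {S : Type*} [AddCommMonoid S] [Preorder S] (ν : S → ℝ≥0∞) : Prop :=
  ν 0 = 0 ∧ (∀ a b : S, ν (a + b) = ν a + ν b) ∧ ∀ a b : S, a ≤ b → ν a ≤ ν b

/-! ### A version of the M. Riesz extension theorem for ℚ-vector spaces with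
ℝ-valued functionals.  This is a port of `riesz_extension` from Mathlib. -/

section QRiesz

open Submodule

variable {E : Type*} [AddCommGroup E] [Module ℚ E]

theorem qriesz_step (s : ConvexCone ℚ E) (f : E →ₗ.[ℚ] ℝ)
    (nonneg : ∀ x : f.domain, (x : E) ∈ s → 0 ≤ f x)
    (dense : ∀ y, ∃ x : f.domain, (x : E) + y ∈ s) (hdom : f.domain ≠ ⊤) :
    ∃ g, f < g ∧ ∀ x : g.domain, (x : E) ∈ s → 0 ≤ g x := by
  obtain ⟨y, -, hy⟩ : ∃ y ∈ ⊤, y ∉ f.domain := SetLike.exists_of_lt (lt_top_iff_ne_top.2 hdom)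
  obtain ⟨c, le_c, c_le⟩ :
      ∃ c, (∀ x : f.domain, -(x : E) - y ∈ s → f x ≤ c) ∧
        ∀ x : f.domain, (x : E) + y ∈ s → c ≤ f x := by
    set Sp := f '' { x : f.domain | (x : E) + y ∈ s }
    set Sn := f '' { x : f.domain | -(x : E) - y ∈ s }
    suffices (upperBounds Sn ∩ lowerBounds Sp).Nonempty by
      simpa only [Sp, Sn, Set.Nonempty, upperBounds, lowerBounds, Set.forall_mem_image, Set.mem_inter_iff, Set.mem_setOf_eq] using this
    refine exists_between_of_forall_le (Set.Nonempty.image f ?_) (Set.Nonempty.image f (dense y)) ?_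
    · rcases dense (-y) with ⟨x, hx⟩
      rw [← neg_neg x, NegMemClass.coe_neg, ← sub_eq_add_neg] at hx
      exact ⟨_, hx⟩
    rintro a ⟨xn, hxn, rfl⟩ b ⟨xp, hxp, rfl⟩
    have := s.add_mem hxp hxn
    rw [add_assoc, add_sub_cancel, ← sub_eq_add_neg, ← AddSubgroupClass.coe_sub] at this
    replace := nonneg _ this
    rwa [f.map_sub, sub_nonneg] at this
  refine ⟨f.supSpanSingleton y (-c) hy, ?_, ?_⟩
  · refine lt_iff_le_not_ge.2 ⟨f.left_le_sup _ _, fun H => ?_⟩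
    replace H := LinearPMap.domain_mono.monotone H
    rw [LinearPMap.domain_supSpanSingleton, sup_le_iff, span_le, Set.singleton_subset_iff] at H
    exact hy H.2
  · rintro ⟨z, hz⟩ hzs
    rcases mem_sup.1 hz with ⟨x, hx, y', hy', rfl⟩
    rcases mem_span_singleton.1 hy' with ⟨r, rfl⟩
    simp only [Subtype.coe_mk] at hzs
    rw [LinearPMap.supSpanSingleton_apply_mk _ _ _ _ _ hx, smul_neg, ← sub_eq_add_neg, sub_nonneg,
      Rat.smul_def]
    rcases lt_trichotomy r 0 with (hr | hr | hr)
    · have : -(r⁻¹ • x) - y ∈ s := by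
        rwa [← s.smul_mem_iff (neg_pos.2 hr), smul_sub, smul_neg, neg_smul, neg_neg, smul_smul,
          mul_inv_cancel₀ hr.ne, one_smul, sub_eq_add_neg, neg_smul, neg_neg]
      replace : f (r⁻¹ • ⟨x, hx⟩) ≤ c := le_c (r⁻¹ • ⟨x, hx⟩) (by exact this)
      rw [f.map_smul, Rat.smul_def] at this
      have hrR : ((r : ℝ))⁻¹ * f ⟨x, hx⟩ ≤ c := by
        simpa using this
      have hrneg : (r : ℝ) < 0 := by exact_mod_cast hr
      -- multiply both sides by r (negative) flips the inequality
      have := mul_le_mul_of_nonpos_left hrR hrneg.le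
      rwa [← mul_assoc, mul_inv_cancel₀ hrneg.ne, one_mul] at this
    · subst r
      simp only [zero_smul, add_zero] at hzs ⊢
      rw [RingHom.id_apply, Rat.cast_zero, zero_mul]
      exact nonneg _ hzs
    · have : r⁻¹ • x + y ∈ s := by
        rwa [← s.smul_mem_iff hr, smul_add, smul_smul, mul_inv_cancel₀ hr.ne', one_smul]
      replace : c ≤ f (r⁻¹ • ⟨x, hx⟩) := c_le (r⁻¹ • ⟨x, hx⟩) (by exact this)
      rw [f.map_smul, Rat.smul_def] at this
      have hrR : (0:ℝ) < (r : ℝ) := by exact_mod_cast hr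
      have hrR' : c ≤ ((r:ℝ))⁻¹ * f ⟨x, hx⟩ := by simpa using this
      have := mul_le_mul_of_nonneg_left hrR' hrR.le
      rwa [← mul_assoc, mul_inv_cancel₀ hrR.ne', one_mul] at this

theorem qriesz_exists_top (s : ConvexCone ℚ E) (p : E →ₗ.[ℚ] ℝ)
    (hp_nonneg : ∀ x : p.domain, (x : E) ∈ s → 0 ≤ p x)
    (hp_dense : ∀ y, ∃ x : p.domain, (x : E) + y ∈ s) :
    ∃ q ≥ p, q.domain = ⊤ ∧ ∀ x : q.domain, (x : E) ∈ s → 0 ≤ q x := by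
  set SS := { p : E →ₗ.[ℚ] ℝ | ∀ x : p.domain, (x : E) ∈ s → 0 ≤ p x }
  have hSc : ∀ c, c ⊆ SS → IsChain (· ≤ ·) c → ∀ y ∈ c, ∃ ub ∈ SS, ∀ z ∈ c, z ≤ ub := by
    intro c hcs c_chain y hy
    clear hp_nonneg hp_dense p
    have cne : c.Nonempty := ⟨y, hy⟩
    have hcd : DirectedOn (· ≤ ·) c := c_chain.directedOn
    refine ⟨LinearPMap.sSup c hcd, ?_, fun _ ↦ LinearPMap.le_sSup hcd⟩
    rintro ⟨x, hx⟩ hxs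
    have hdir : DirectedOn (· ≤ ·) (LinearPMap.domain '' c) :=
      directedOn_image.2 (hcd.mono LinearPMap.domain_mono.monotone)
    rcases (mem_sSup_of_directed (cne.image _) hdir).1 hx with ⟨_, ⟨f, hfc, rfl⟩, hfx⟩
    have : f ≤ LinearPMap.sSup c hcd := LinearPMap.le_sSup _ hfc
    convert ← hcs hfc ⟨x, hfx⟩ hxs using 1
    exact this.2 rfl
  obtain ⟨q, hpq, hqs, hq⟩ := zorn_le_nonempty₀ SS hSc p hp_nonneg
  refine ⟨q, hpq, ?_, hqs⟩
  contrapose! hq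
  have hqd : ∀ y, ∃ x : q.domain, (x : E) + y ∈ s := fun y ↦
    let ⟨x, hx⟩ := hp_dense y
    ⟨Submodule.inclusion hpq.left x, hx⟩
  rcases qriesz_step s q hqs hqd hq with ⟨r, hqr, hr⟩
  exact ⟨r, hr, hqr.le, fun hrq ↦ hqr.ne' <| hrq.antisymm hqr.le⟩

theorem qriesz_extension (s : ConvexCone ℚ E) (f : E →ₗ.[ℚ] ℝ)
    (nonneg : ∀ x : f.domain, (x : E) ∈ s → 0 ≤ f x)
    (dense : ∀ y, ∃ x : f.domain, (x : E) + y ∈ s) :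
    ∃ g : E →ₗ[ℚ] ℝ, (∀ x : f.domain, g x = f x) ∧ ∀ x ∈ s, 0 ≤ g x := by
  rcases qriesz_exists_top s f nonneg dense
    with ⟨⟨g_dom, g⟩, ⟨-, hfg⟩, rfl : g_dom = ⊤, hgs⟩
  refine ⟨g.comp (LinearMap.id.codRestrict ⊤ fun _ ↦ trivial), ?_, ?_⟩
  · exact fun x => (hfg rfl).symm
  · exact fun x hx => hgs ⟨x, _⟩ hx

end QRiesz

section Construction

variable {S : Type*} [AddCommMonoid S] [Preorder S]
  [AddLeftMono S] [AddRightMono S]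

variable (hz : ∀ y : S, 0 ≤ y) (x : S)

noncomputable section

/-- The submonoid of elements dominated by a multiple of `x`. -/
def TT : AddSubmonoid S where
  carrier := {y | ∃ n : ℕ, y ≤ n • x}
  zero_mem' := ⟨0, hz _⟩
  add_mem' := by
    rintro a b ⟨n, hn⟩ ⟨m, hm⟩
    exact ⟨n + m, by rw [add_nsmul]; exact add_le_add hn hm⟩

abbrev EE := (TT hz x) →₀ ℚ

def dd (a : TT hz x) : EE hz x := Finsupp.single a 1

/-- Generators of the cone: order relations and (both signs of) additivity relations. -/
def GG : Set (EE hz x) :=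
  {h | (∃ a b : TT hz x, (a : S) ≤ (b : S) ∧ h = dd hz x b - dd hz x a) ∨
    (∃ a b : TT hz x, h = dd hz x (a + b) - dd hz x a - dd hz x b) ∨
    (∃ a b : TT hz x, h = dd hz x a + dd hz x b - dd hz x (a + b))}

def coneGen : AddSubmonoid (EE hz x) :=
  AddSubmonoid.closure {h | ∃ c : ℚ, 0 ≤ c ∧ ∃ g ∈ GG hz x, h = c • g}

def coneS : ConvexCone ℚ (EE hz x) where
  carrier := coneGen hz x
  smul_mem' := by
    intro c hc f hf
    refine AddSubmonoid.closure_induction ?_ ?_ ?_ hf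
    · rintro h ⟨c', hc', g, hg, rfl⟩
      rw [smul_smul]
      exact AddSubmonoid.subset_closure ⟨c * c', by positivity, g, hg, rfl⟩
    · rw [smul_zero]; exact (coneGen hz x).zero_mem
    · intro a b _ _ ha hb
      rw [smul_add]; exact (coneGen hz x).add_mem ha hb
  add_mem' := fun _ ha _ hb => (coneGen hz x).add_mem ha hb

lemma mem_coneS_of_mem_GG {g : EE hz x} (hg : g ∈ GG hz x) : g ∈ coneS hz x :=
  AddSubmonoid.subset_closure ⟨1, zero_le_one, g, hg, (one_smul _ _).symm⟩

lemma smul_mem_coneS {c : ℚ} (hc : 0 ≤ c) {f : EE hz x} (hf : f ∈ coneS hz x) :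
    c • f ∈ coneS hz x := by
  rcases eq_or_lt_of_le hc with rfl | hc
  · rw [zero_smul]; exact (coneGen hz x).zero_mem
  · exact (coneS hz x).smul_mem hc hf

lemma dd_zero_mem : dd hz x 0 ∈ coneS hz x := by
  have : dd hz x 0 + dd hz x 0 - dd hz x (0 + 0) ∈ GG hz x := Or.inr (Or.inr ⟨0, 0, rfl⟩)
  have h2 : dd hz x 0 + dd hz x 0 - dd hz x (0 + 0) = dd hz x 0 := by
    rw [add_zero]; abel
  rw [h2] at this
  exact mem_coneS_of_mem_GG hz x this

lemma neg_dd_zero_mem : -dd hz x 0 ∈ coneS hz x := by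
  have : dd hz x (0 + 0) - dd hz x 0 - dd hz x 0 ∈ GG hz x := Or.inr (Or.inl ⟨0, 0, rfl⟩)
  have h2 : dd hz x (0 + 0) - dd hz x 0 - dd hz x 0 = -dd hz x 0 := by
    rw [add_zero]; abel
  rw [h2] at this
  exact mem_coneS_of_mem_GG hz x this

lemma dd_mem (a : TT hz x) : dd hz x a ∈ coneS hz x := by
  have h1 : dd hz x a - dd hz x 0 ∈ GG hz x :=
    Or.inl ⟨0, a, by simpa using hz (a : S), rfl⟩
  have : (dd hz x a - dd hz x 0) + dd hz x 0 ∈ coneS hz x :=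
    (coneS hz x).add_mem (mem_coneS_of_mem_GG hz x h1) (dd_zero_mem hz x)
  simpa using this

/-- the sum of an `ℕ`-valued finsupp, inside `TT`. -/
def sumT : ((TT hz x) →₀ ℕ) →+ (TT hz x) :=
  Finsupp.liftAddHom fun y => multiplesHom _ y

/-- cast an `ℕ`-valued finsupp to a `ℚ`-valued one -/
def castE : ((TT hz x) →₀ ℕ) →+ EE hz x :=
  Finsupp.mapRange.addMonoidHom (Nat.castAddMonoidHom ℚ)

lemma castE_apply (P : (TT hz x) →₀ ℕ) (y : TT hz x) : castE hz x P y = (P y : ℚ) := by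
  simp [castE, Finsupp.mapRange.addMonoidHom]
  exact Finsupp.mapRange_apply ..

lemma castE_single (y : TT hz x) (n : ℕ) :
    castE hz x (Finsupp.single y n) = Finsupp.single y (n : ℚ) := by
  simp [castE, Finsupp.mapRange.addMonoidHom]
  exact Finsupp.mapRange_single ..

lemma sumT_single (y : TT hz x) (n : ℕ) : sumT hz x (Finsupp.single y n) = n • y := by
  simp [sumT]

/-- the certificate set. -/
def DD : Set (EE hz x) :=
  {h | ∃ (d : ℕ) (P Q : (TT hz x) →₀ ℕ), 0 < d ∧
    (d : ℚ) • h = castE hz x P - castE hz x Q ∧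
    ((sumT hz x Q : TT hz x) : S) ≤ ((sumT hz x P : TT hz x) : S)}

lemma GG_subset_DD {g : EE hz x} (hg : g ∈ GG hz x) : g ∈ DD hz x := by
  rcases hg with ⟨a, b, hab, rfl⟩ | ⟨a, b, rfl⟩ | ⟨a, b, rfl⟩
  · refine ⟨1, Finsupp.single b 1, Finsupp.single a 1, one_pos, ?_, ?_⟩
    · rw [castE_single, castE_single, Nat.cast_one, one_smul]; rfl
    · rw [sumT_single, sumT_single, one_nsmul, one_nsmul]; exact hab
  · refine ⟨1, Finsupp.single (a + b) 1, Finsupp.single a 1 + Finsupp.single b 1, one_pos, ?_, ?_⟩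
    · rw [map_add, castE_single, castE_single, castE_single, Nat.cast_one, one_smul, dd, dd, dd]
      abel
    · rw [sumT_single, map_add, sumT_single, sumT_single, one_nsmul, one_nsmul, one_nsmul]
  · refine ⟨1, Finsupp.single a 1 + Finsupp.single b 1, Finsupp.single (a + b) 1, one_pos, ?_, ?_⟩
    · rw [map_add, castE_single, castE_single, castE_single, Nat.cast_one, one_smul, dd, dd, dd]
    · rw [map_add, sumT_single, sumT_single, sumT_single, one_nsmul, one_nsmul, one_nsmul]

lemma sumT_le_sumT_of_nsmul (n : ℕ) {P Q : (TT hz x) →₀ ℕ}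
    (h : ((sumT hz x Q : TT hz x) : S) ≤ ((sumT hz x P : TT hz x) : S)) :
    ((sumT hz x (n • Q) : TT hz x) : S) ≤ ((sumT hz x (n • P) : TT hz x) : S) := by
  rw [map_nsmul, map_nsmul]
  have := nsmul_le_nsmul_right h n
  simpa [AddSubmonoidClass.coe_nsmul] using this

lemma coneS_subset_DD {f : EE hz x} (hf : f ∈ coneS hz x) : f ∈ DD hz x := by
  refine AddSubmonoid.closure_induction ?_ ?_ ?_ hf
  · rintro h ⟨c, hc, g, hg, rfl⟩
    obtain ⟨d, P, Q, hd, heq, hle⟩ := GG_subset_DD hz x hg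
    -- d = 1 always here, but do it in general
    refine ⟨c.den * d, c.num.toNat • P, c.num.toNat • Q, ?_, ?_, sumT_le_sumT_of_nsmul hz x _ hle⟩
    · exact Nat.mul_pos c.den_pos hd
    · have h1 : (c.num.toNat : ℤ) = c.num := Int.toNat_of_nonneg (Rat.num_nonneg.2 hc)
      have hnum : (c.num.toNat : ℚ) = (c.num : ℚ) := by exact_mod_cast h1
      have key : ((c.den * d : ℕ) : ℚ) * c = (c.num.toNat : ℚ) * (d : ℚ) := by
        push_cast
        rw [hnum]
        have h2 := Rat.mul_den_eq_num c
        push_cast at h2 ⊢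
        linear_combination (d : ℚ) * h2
      have : ((c.den * d : ℕ) : ℚ) • (c • g) = c.num.toNat • ((d:ℚ) • g) := by
        rw [smul_smul, key, ← smul_smul, Nat.cast_smul_eq_nsmul]
      rw [this, heq, map_nsmul, map_nsmul]
      simp [← Nat.cast_smul_eq_nsmul ℚ, smul_sub]
  · exact ⟨1, 0, 0, one_pos, by simp, le_refl _⟩
  · rintro a b _ _ ⟨d₁, P₁, Q₁, hd₁, he₁, hl₁⟩ ⟨d₂, P₂, Q₂, hd₂, he₂, hl₂⟩
    refine ⟨d₁ * d₂, d₂ • P₁ + d₁ • P₂, d₂ • Q₁ + d₁ • Q₂, Nat.mul_pos hd₁ hd₂, ?_, ?_⟩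
    · have : ((d₁ * d₂ : ℕ) : ℚ) • (a + b) = (d₂:ℚ) • ((d₁:ℚ) • a) + (d₁:ℚ) • ((d₂:ℚ) • b) := by
        push_cast; rw [smul_smul, smul_smul, smul_add]; ring_nf
      rw [this, he₁, he₂, map_add, map_add, map_nsmul, map_nsmul, map_nsmul, map_nsmul]
      rw [← Nat.cast_smul_eq_nsmul ℚ d₂, ← Nat.cast_smul_eq_nsmul ℚ d₁,
        ← Nat.cast_smul_eq_nsmul ℚ d₂ (castE hz x Q₁), ← Nat.cast_smul_eq_nsmul ℚ d₁ (castE hz x Q₂)]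
      rw [smul_sub, smul_sub]
      abel
    · rw [map_add, map_add]
      push_cast [AddSubmonoid.coe_add]
      exact add_le_add (sumT_le_sumT_of_nsmul hz x _ hl₁) (sumT_le_sumT_of_nsmul hz x _ hl₂)

def xT : TT hz x := ⟨x, 1, le_of_eq (one_nsmul x).symm⟩

lemma L1 (n : ℕ) : (n : ℚ) • dd hz x (xT hz x) - dd hz x (n • xT hz x) ∈ coneS hz x := by
  induction n with
  | zero =>
    have : ((0:ℕ) : ℚ) • dd hz x (xT hz x) - dd hz x (0 • xT hz x) = -dd hz x 0 := by
      rw [zero_nsmul]; push_cast; rw [zero_smul, zero_sub]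
    rw [this]; exact neg_dd_zero_mem hz x
  | succ n ih =>
    have hshape : dd hz x (xT hz x) + dd hz x (n • xT hz x)
        - dd hz x (xT hz x + n • xT hz x) ∈ GG hz x :=
      Or.inr (Or.inr ⟨xT hz x, n • xT hz x, rfl⟩)
    have hsum := (coneS hz x).add_mem ih (mem_coneS_of_mem_GG hz x hshape)
    have heq : ((n:ℚ) • dd hz x (xT hz x) - dd hz x (n • xT hz x)) +
        (dd hz x (xT hz x) + dd hz x (n • xT hz x) - dd hz x (xT hz x + n • xT hz x)) =
        ((n + 1 : ℕ) : ℚ) • dd hz x (xT hz x) - dd hz x ((n + 1) • xT hz x) := by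
      rw [succ_nsmul' (xT hz x) n]
      push_cast
      rw [add_smul, one_smul]
      abel
    rw [heq] at hsum
    exact hsum

lemma mem_TT_of_le {a b : S} (hb : b ∈ TT hz x) (hab : a ≤ b) : a ∈ TT hz x := by
  obtain ⟨n, hn⟩ := hb
  exact ⟨n, le_trans hab hn⟩

lemma mem_TT_left {a b : S} (hab : a + b ∈ TT hz x) : a ∈ TT hz x :=
  mem_TT_of_le hz x hab (le_add_of_nonneg_right (hz b))

lemma mem_TT_right {a b : S} (hab : a + b ∈ TT hz x) : b ∈ TT hz x :=
  mem_TT_of_le hz x hab (le_add_of_nonneg_left (hz a))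

lemma key_nonneg (hnp : ∀ N : ℕ, 1 ≤ N → ¬((N + 1) • x ≤ N • x)) (c : ℚ)
    (hmem : c • dd hz x (xT hz x) ∈ coneS hz x) : 0 ≤ c := by
  by_contra hneg
  push_neg at hneg
  obtain ⟨d, P, Q, hd, heq, hle⟩ := coneS_subset_DD hz x hmem
  classical
  have hcoord : ∀ y : TT hz x, (P y : ℚ) - (Q y : ℚ)
      = (d : ℚ) * c * (if y = xT hz x then 1 else 0) := by
    intro y
    have h0 := congrArg (fun f : EE hz x => f y) heq
    simp only [Finsupp.smul_apply, Finsupp.sub_apply, dd, Finsupp.single_apply,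
      castE_apply, smul_eq_mul] at h0
    rw [← h0]
    by_cases hy : y = xT hz x <;> simp [hy, eq_comm] <;> ring
  have hPQ : ∀ y : TT hz x, y ≠ xT hz x → P y = Q y := by
    intro y hy
    have := hcoord y
    rw [if_neg hy, mul_zero, sub_eq_zero] at this
    exact_mod_cast this
  have hx0 : (P (xT hz x) : ℚ) - (Q (xT hz x) : ℚ) = (d : ℚ) * c := by
    have := hcoord (xT hz x); rwa [if_pos rfl, mul_one] at this
  have hdc : (d : ℚ) * c < 0 :=
    mul_neg_of_pos_of_neg (by exact_mod_cast hd) hneg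
  have hPltQ : P (xT hz x) < Q (xT hz x) := by
    have : (P (xT hz x) : ℚ) < (Q (xT hz x) : ℚ) := by
      have := hx0 ▸ hdc; linarith [this]
    exact_mod_cast this
  obtain ⟨M, hM1, hQP⟩ : ∃ M : ℕ, 1 ≤ M ∧ Q (xT hz x) = P (xT hz x) + M :=
    ⟨Q (xT hz x) - P (xT hz x), by omega, by omega⟩
  have hQeq : Q = P + Finsupp.single (xT hz x) M := by
    ext y
    by_cases hy : y = xT hz x
    · subst hy
      simp only [Finsupp.add_apply, Finsupp.single_apply]
      split_ifs with h
      · omega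
      · simp at h
    · simp only [Finsupp.add_apply, Finsupp.single_apply]
      split_ifs with h
      · exact absurd h.symm hy
      · rw [add_zero]; exact (hPQ y hy).symm
  have hsum : sumT hz x Q = sumT hz x P + M • xT hz x := by
    rw [hQeq, map_add, sumT_single]
  rw [hsum] at hle
  set z : S := ((sumT hz x P : TT hz x) : S) with hzdef
  have h1 : z + M • x ≤ z := by
    have : (((sumT hz x P + M • xT hz x : TT hz x)) : S) = z + M • x := by
      push_cast [AddSubmonoid.coe_add, AddSubmonoidClass.coe_nsmul]
      rfl
    rwa [this] at hle
  have hiter : ∀ j : ℕ, z + (j * M) • x ≤ z := by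
    intro j
    induction j with
    | zero => simp
    | succ j ih =>
      have : z + ((j + 1) * M) • x = (z + (j * M) • x) + M • x := by
        rw [add_mul, one_mul, add_nsmul, add_assoc]
      rw [this]
      exact le_trans (add_le_add_left ih (M • x)) h1
  obtain ⟨K, hK⟩ := (sumT hz x P).2
  set N : ℕ := K + 1 with hN
  have hzN : z ≤ N • x := by
    refine le_trans hK ?_
    rw [succ_nsmul]
    exact le_add_of_nonneg_right (hz x)
  obtain ⟨M', rfl⟩ : ∃ M', M = M' + 1 := ⟨M - 1, by omega⟩
  have hfinal : (N + 1) • x ≤ N • x := by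
    have e1 : (N + 1) • x ≤ ((N + 1) * (M' + 1)) • x := by
      have h2 : ((N + 1) * (M' + 1)) • x = ((N + 1) * M') • x + (N + 1) • x := by
        rw [show (N + 1) * (M' + 1) = (N + 1) * M' + (N + 1) from by rw [Nat.mul_succ], add_nsmul]
      rw [h2]
      exact le_add_of_nonneg_left (hz _)
    have e2 : ((N + 1) * (M' + 1)) • x ≤ z + ((N + 1) * (M' + 1)) • x :=
      le_add_of_nonneg_left (hz z)
    exact le_trans e1 (le_trans e2 (le_trans (hiter (N + 1)) hzN))
  exact hnp N (by omega) hfinal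

lemma dense_aux (y : EE hz x) :
    ∃ c : ℚ, c • dd hz x (xT hz x) + y ∈ coneS hz x := by
  induction y using Finsupp.induction with
  | zero =>
    refine ⟨0, ?_⟩
    rw [zero_smul, add_zero]
    exact (coneGen hz x).zero_mem
  | single_add a r f haf hr ih =>
    obtain ⟨c₁, hc₁⟩ := ih
    obtain ⟨c₂, hc₂⟩ : ∃ c₂ : ℚ, c₂ • dd hz x (xT hz x) + Finsupp.single a r ∈ coneS hz x := by
      rcases le_or_gt 0 r with hr0 | hr0
      · refine ⟨0, ?_⟩
        have hsr : Finsupp.single a r = r • dd hz x a := by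
          rw [dd, Finsupp.smul_single, smul_eq_mul, mul_one]
        rw [zero_smul, zero_add, hsr]
        exact smul_mem_coneS hz x hr0 (dd_mem hz x a)
      · obtain ⟨n, hn⟩ := a.2
        refine ⟨(-r) * n, ?_⟩
        have hmem1 : (n : ℚ) • dd hz x (xT hz x) - dd hz x a ∈ coneS hz x := by
          have hord : dd hz x (n • xT hz x) - dd hz x a ∈ GG hz x := by
            refine Or.inl ⟨a, n • xT hz x, ?_, rfl⟩
            have : ((n • xT hz x : TT hz x) : S) = n • x := by
              rw [AddSubmonoidClass.coe_nsmul]; rfl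
            rw [this]; exact hn
          have := (coneS hz x).add_mem (L1 hz x n) (mem_coneS_of_mem_GG hz x hord)
          have heq2 : ((n : ℚ) • dd hz x (xT hz x) - dd hz x (n • xT hz x)) +
              (dd hz x (n • xT hz x) - dd hz x a)
              = (n : ℚ) • dd hz x (xT hz x) - dd hz x a := by abel
          rwa [heq2] at this
        have heq3 : ((-r) * n) • dd hz x (xT hz x) + Finsupp.single a r
            = (-r) • ((n : ℚ) • dd hz x (xT hz x) - dd hz x a) := by
          have hsr : Finsupp.single a r = r • dd hz x a := by
            rw [dd, Finsupp.smul_single, smul_eq_mul, mul_one]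
          rw [hsr, smul_sub, smul_smul, neg_smul r (dd hz x a)]
          abel
        rw [heq3]
        exact smul_mem_coneS hz x (by linarith) hmem1
    refine ⟨c₂ + c₁, ?_⟩
    have : (c₂ + c₁) • dd hz x (xT hz x) + (Finsupp.single a r + f)
        = (c₂ • dd hz x (xT hz x) + Finsupp.single a r) + (c₁ • dd hz x (xT hz x) + f) := by
      rw [add_smul]; abel
    rw [this]
    exact (coneS hz x).add_mem hc₂ hc₁

end

end Construction

theorem exists_state_of_no_paradox
    {S : Type*} [AddCommMonoid S] [Preorder S] [AddLeftMono S] [AddRightMono S]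
    (hz : ∀ y : S, 0 ≤ y) (x : S)
    (hnp : ∀ N : ℕ, 1 ≤ N → ¬((N + 1) • x ≤ N • x)) :
    ∃ ν : S → ℝ≥0∞, IsState ν ∧ ∃ y : S, ν y ≠ 0 ∧ ν y ≠ ∞ := by
  classical
  have hdd_ne : dd hz x (xT hz x) ≠ 0 := by
    rw [dd]
    intro h
    exact one_ne_zero (Finsupp.single_eq_zero.1 h)
  set f := LinearPMap.mkSpanSingleton (K := ℚ) (σ := RingHom.id ℚ) (dd hz x (xT hz x)) (1 : ℝ) hdd_ne with hf
  have nonneg : ∀ v : f.domain, (v : EE hz x) ∈ coneS hz x → 0 ≤ f v := by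
    rintro ⟨v, hv⟩ hvs
    obtain ⟨c, hc⟩ := Submodule.mem_span_singleton.1 hv
    have hsub : (⟨v, hv⟩ : f.domain) = ⟨c • dd hz x (xT hz x), hc ▸ hv⟩ := Subtype.ext hc.symm
    rw [hsub]
    have happ : f ⟨c • dd hz x (xT hz x), hc ▸ hv⟩ = c • (1:ℝ) :=
      LinearPMap.mkSpanSingleton'_apply _ _ _ c _
    rw [happ, Rat.smul_def, mul_one]
    have hcept : (0:ℚ) ≤ c := by
      refine key_nonneg hz x hnp c ?_
      rw [hc]
      exact hvs
    exact_mod_cast hcept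
  have dense : ∀ y : EE hz x, ∃ v : f.domain, (v : EE hz x) + y ∈ coneS hz x := by
    intro y
    obtain ⟨c, hc⟩ := dense_aux hz x y
    refine ⟨⟨c • dd hz x (xT hz x), ?_⟩, hc⟩
    exact Submodule.smul_mem _ c (Submodule.mem_span_singleton_self _)
  obtain ⟨g, hg_eq, hg_nonneg⟩ := qriesz_extension (coneS hz x) f nonneg dense
  have hgx : g (dd hz x (xT hz x)) = 1 := by
    have hmem : dd hz x (xT hz x) ∈ f.domain := Submodule.mem_span_singleton_self _
    have h1 := hg_eq ⟨dd hz x (xT hz x), hmem⟩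
    rw [h1]
    exact LinearPMap.mkSpanSingleton'_apply_self _ _ _ _
  have hgdd : ∀ a : TT hz x, 0 ≤ g (dd hz x a) := fun a => hg_nonneg _ (dd_mem hz x a)
  have hgadd : ∀ a b : TT hz x, g (dd hz x (a + b)) = g (dd hz x a) + g (dd hz x b) := by
    intro a b
    have h1 := hg_nonneg _ (mem_coneS_of_mem_GG hz x (Or.inr (Or.inl ⟨a, b, rfl⟩)))
    have h2 := hg_nonneg _ (mem_coneS_of_mem_GG hz x (Or.inr (Or.inr ⟨a, b, rfl⟩)))
    rw [map_sub, map_sub] at h1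
    rw [map_sub, map_add] at h2
    linarith
  have hg0 : g (dd hz x 0) = 0 := by
    have h1 := hgadd 0 0
    rw [add_zero] at h1
    linarith
  refine ⟨fun y => if h : y ∈ TT hz x then ENNReal.ofReal (g (dd hz x ⟨y, h⟩)) else ∞,
    ⟨?_, ?_, ?_⟩, x, ?_, ?_⟩
  · dsimp only
    have h0 : (0:S) ∈ TT hz x := (TT hz x).zero_mem
    rw [dif_pos h0]
    have he : (⟨(0:S), h0⟩ : TT hz x) = 0 := rfl
    rw [he, hg0]
    simp
  · intro a b
    dsimp only
    by_cases ha : a ∈ TT hz x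
    · by_cases hb : b ∈ TT hz x
      · have hab : a + b ∈ TT hz x := (TT hz x).add_mem ha hb
        rw [dif_pos ha, dif_pos hb, dif_pos hab]
        have he : (⟨a + b, hab⟩ : TT hz x) = ⟨a, ha⟩ + ⟨b, hb⟩ := rfl
        rw [he, hgadd]
        exact ENNReal.ofReal_add (hgdd _) (hgdd _)
      · have hab : a + b ∉ TT hz x := fun h => hb (mem_TT_right hz x h)
        rw [dif_neg hb, dif_neg hab, add_top]
    · have hab : a + b ∉ TT hz x := fun h => ha (mem_TT_left hz x h)
      rw [dif_neg ha, dif_neg hab, top_add]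
  · intro a b hab
    dsimp only
    by_cases hb : b ∈ TT hz x
    · have ha : a ∈ TT hz x := mem_TT_of_le hz x hb hab
      rw [dif_pos ha, dif_pos hb]
      apply ENNReal.ofReal_le_ofReal
      have h1 := hg_nonneg _ (mem_coneS_of_mem_GG hz x (Or.inl ⟨⟨a, ha⟩, ⟨b, hb⟩, hab, rfl⟩))
      rw [map_sub] at h1
      linarith
    · rw [dif_neg hb]
      exact le_top
  · dsimp only
    have hxT : x ∈ TT hz x := (xT hz x).2
    rw [dif_pos hxT]
    have he : (⟨x, hxT⟩ : TT hz x) = xT hz x := rfl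
    rw [he, hgx]
    simp
  · dsimp only
    have hxT : x ∈ TT hz x := (xT hz x).2
    rw [dif_pos hxT]
    have he : (⟨x, hxT⟩ : TT hz x) = xT hz x := rfl
    rw [he, hgx]
    simp

/-- If a nonzero preordered abelian monoid has plain paradoxes, then either it admits a
nontrivial state or it is purely infinite.  Conversely, if it is simple and admits a
nontrivial state or is purely infinite, then it has plain paradoxes. -/
theorem stmt6 {S : Type*} [AddCommMonoid S] [Preorder S]
    (hzero : ∀ x : S, 0 ≤ x)
    (hadd : ∀ x y z : S, x ≤ y → x + z ≤ y + z)
    (hS : ∃ x : S, x ≠ 0) :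
    ((∀ (x : S) (n : ℕ), 1 ≤ n → (n + 1) • x ≤ n • x → x + x ≤ x) →
      (∃ ν : S → ℝ≥0∞, IsState ν ∧ ∃ x : S, ν x ≠ 0 ∧ ν x ≠ ∞) ∨
        (∀ x : S, x ≠ 0 → x + x ≤ x)) ∧
    ((∀ x y : S, y ≠ 0 → ∃ n : ℕ, x ≤ n • y) →
      ((∃ ν : S → ℝ≥0∞, IsState ν ∧ ∃ x : S, ν x ≠ 0 ∧ ν x ≠ ∞) ∨
        (∀ x : S, x ≠ 0 → x + x ≤ x)) →
      (∀ (x : S) (n : ℕ), 1 ≤ n → (n + 1) • x ≤ n • x → x + x ≤ x)) := by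
  constructor
  · intro hpp
    by_cases hpi : ∀ y : S, y ≠ 0 → y + y ≤ y
    · exact Or.inr hpi
    · push_neg at hpi
      obtain ⟨x, hx0, hxnpi⟩ := hpi
      haveI hL : AddLeftMono S := ⟨fun a _ _ h => by
        have h2 := hadd _ _ a h
        rwa [add_comm _ a, add_comm _ a] at h2⟩
      haveI hR : AddRightMono S := ⟨fun a _ _ h => hadd _ _ a h⟩
      have hnp : ∀ N : ℕ, 1 ≤ N → ¬((N + 1) • x ≤ N • x) := fun N h1 hle =>
        hxnpi (hpp x N h1 hle)
      obtain ⟨ν, hν, y, hy0, hyt⟩ := exists_state_of_no_paradox hzero x hnp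
      exact Or.inl ⟨ν, hν, y, hy0, hyt⟩
  · intro hsimple hor x n hn1 hpar
    by_cases hx0 : x = 0
    · subst hx0
      simpa using le_refl (0:S)
    · rcases hor with ⟨ν, ⟨hν0, hνadd, hνmono⟩, y₀, hy₀0, hy₀t⟩ | hpi
      · exfalso
        have hsmul : ∀ (k : ℕ) (a : S), ν (k • a) = k • ν a := by
          intro k a
          induction k with
          | zero => simpa using hν0
          | succ k ih => rw [succ_nsmul, succ_nsmul, hνadd, ih]
        have hy₀ne : y₀ ≠ 0 := fun h => hy₀0 (h ▸ hν0)
        obtain ⟨m, hm⟩ := hsimple y₀ x hx0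
        obtain ⟨k, hk⟩ := hsimple x y₀ hy₀ne
        have hνx_pos : ν x ≠ 0 := by
          intro h
          apply hy₀0
          have h2 := hνmono _ _ hm
          rw [hsmul, h] at h2
          simpa using h2
        have hνx_fin : ν x ≠ ∞ := by
          have h2 : ν x ≤ k • ν y₀ := by
            rw [← hsmul]
            exact hνmono _ _ hk
          intro h
          rw [h, top_le_iff] at h2
          rw [nsmul_eq_mul] at h2
          exact ENNReal.mul_ne_top (ENNReal.natCast_ne_top k) hy₀t h2
        have hmono2 := hνmono _ _ hpar
        rw [hsmul, hsmul] at hmono2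
        have hlt : n • ν x < (n + 1) • ν x := by
          rw [succ_nsmul]
          refine ENNReal.lt_add_right ?_ hνx_pos
          rw [nsmul_eq_mul]
          exact ENNReal.mul_ne_top (ENNReal.natCast_ne_top n) hνx_fin
        exact absurd hmono2 (not_le.2 hlt)
      · exact hpi x hx0
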